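/- Let C in M_n(\u2102) be positive semidefinite with I - C positive semidefinite (a positive contraction). Then the 2n-by-2n block matrix P_C = [[C, \u221a(C(I-C))], [\u221a(C(I-C)), I - C]] is an orthogonal projection, where \u221a(C(I-C)) denotes the unique positive semidefinite square root of the positive semidefinite matrix C(I-C). -/

import Mathlib

open Matrix
open scoped ComplexOrder

/-- If `M` commutes with `diagonal (d : n → ℝ)` (coerced to `ℂ`), then it commutes with
`diagonal (f ∘ d)` for any `f : ℝ → ℝ`. -/
lemma commute_diagonal_apply {n : ℕ} (M : Matrix (Fin n) (Fin n) ℂ) (d : Fin n → ℝ) (f : ℝ → ℝ)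
    (h : M * Matrix.diagonal (RCLike.ofReal ∘ d) = Matrix.diagonal (RCLike.ofReal ∘ d) * M) :
    M * Matrix.diagonal (RCLike.ofReal ∘ f ∘ d)
      = Matrix.diagonal (RCLike.ofReal ∘ f ∘ d) * M := by
  ext i j
  have h1 : M i j * (d j : ℂ) = (d i : ℂ) * M i j := by
    have := congrFun (congrFun h i) j
    simpa [Matrix.mul_diagonal, Matrix.diagonal_mul] using this
  rw [Matrix.mul_diagonal, Matrix.diagonal_mul]
  rcases eq_or_ne (d i) (d j) with hd | hd
  · simp [Function.comp, hd, mul_comm]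
  · have hM : M i j = 0 := by
      by_contra hM
      apply hd
      have h2 : (d j : ℂ) * M i j = (d i : ℂ) * M i j := by rw [mul_comm] at h1; exact h1
      have : (d j : ℂ) = (d i : ℂ) := mul_right_cancel₀ hM h2
      exact_mod_cast this.symm
    simp [hM]

lemma conj_commute_of {n : ℕ} (U B D : Matrix (Fin n) (Fin n) ℂ)
    (hU1 : star U * U = 1)
    (h : B * (U * D * star U) = (U * D * star U) * B) :
    (star U * B * U) * D = D * (star U * B * U) := by
  have h2 : star U * (B * (U * D * star U)) * U = star U * ((U * D * star U) * B) * U := by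
    rw [h]
  calc (star U * B * U) * D
      = star U * B * U * D * (star U * U) := by rw [hU1, mul_one]
    _ = star U * (B * (U * D * star U)) * U := by noncomm_ring
    _ = star U * ((U * D * star U) * B) * U := h2
    _ = (star U * U) * D * (star U * B * U) := by noncomm_ring
    _ = D * (star U * B * U) := by rw [hU1, one_mul]

lemma conj_commute_of' {n : ℕ} (U B D : Matrix (Fin n) (Fin n) ℂ)
    (hU2 : U * star U = 1)
    (h : (star U * B * U) * D = D * (star U * B * U)) :
    B * (U * D * star U) = (U * D * star U) * B := by
  have h2 : U * ((star U * B * U) * D) * star U = U * (D * (star U * B * U)) * star U := by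
    rw [h]
  calc B * (U * D * star U)
      = (U * star U) * B * (U * D * star U) := by rw [hU2, one_mul]
    _ = U * ((star U * B * U) * D) * star U := by noncomm_ring
    _ = U * (D * (star U * B * U)) * star U := h2
    _ = (U * D * star U) * (B * (U * star U)) := by noncomm_ring
    _ = (U * D * star U) * B := by rw [hU2, mul_one]

/-- The positive semidefinite square root (as in the older Mathlib). -/
noncomputable def Matrix.PosSemidef.sqrt {n : ℕ} {A : Matrix (Fin n) (Fin n) ℂ} (hA : A.PosSemidef) :
    Matrix (Fin n) (Fin n) ℂ :=
  (hA.1.eigenvectorUnitary : Matrix (Fin n) (Fin n) ℂ)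
    * Matrix.diagonal (RCLike.ofReal ∘ Real.sqrt ∘ hA.1.eigenvalues)
    * star (hA.1.eigenvectorUnitary : Matrix (Fin n) (Fin n) ℂ)

open scoped MatrixOrder in
lemma Matrix.PosSemidef.eq_sqrt_of_sq_eq {n : ℕ} {A : Matrix (Fin n) (Fin n) ℂ} (hA : A.PosSemidef)
    {B : Matrix (Fin n) (Fin n) ℂ} (hB : B.PosSemidef) (h : A ^ 2 = B) : A = hB.sqrt := by
  have h1 : A = CFC.sqrt B := by rw [← h, CFC.sqrt_sq A hA.nonneg]
  rw [h1, CFC.sqrt_eq_real_sqrt B hB.nonneg, cfcₙ_eq_cfc (hf0 := Real.sqrt_zero), hB.1.cfc_eq, Matrix.IsHermitian.cfc,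
    Unitary.conjStarAlgAut_apply]
  rfl

/-- If `B` commutes with a positive semidefinite matrix `A`, it commutes with its square root. -/
lemma commute_sqrt {n : ℕ} {A B : Matrix (Fin n) (Fin n) ℂ} (hA : A.PosSemidef)
    (h : B * A = A * B) : B * hA.sqrt = hA.sqrt * B := by
  have hU1 : star (hA.1.eigenvectorUnitary : Matrix (Fin n) (Fin n) ℂ)
      * (hA.1.eigenvectorUnitary : Matrix (Fin n) (Fin n) ℂ) = 1 :=
    Unitary.coe_star_mul_self hA.1.eigenvectorUnitary
  have hU2 : (hA.1.eigenvectorUnitary : Matrix (Fin n) (Fin n) ℂ)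
      * star (hA.1.eigenvectorUnitary : Matrix (Fin n) (Fin n) ℂ) = 1 :=
    Unitary.coe_mul_star_self hA.1.eigenvectorUnitary
  have h1 : B * ((hA.1.eigenvectorUnitary : Matrix (Fin n) (Fin n) ℂ)
        * Matrix.diagonal (RCLike.ofReal ∘ hA.1.eigenvalues)
        * star (hA.1.eigenvectorUnitary : Matrix (Fin n) (Fin n) ℂ))
      = ((hA.1.eigenvectorUnitary : Matrix (Fin n) (Fin n) ℂ)
        * Matrix.diagonal (RCLike.ofReal ∘ hA.1.eigenvalues)
        * star (hA.1.eigenvectorUnitary : Matrix (Fin n) (Fin n) ℂ)) * B := by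
    have hs := hA.1.spectral_theorem; rw [Unitary.conjStarAlgAut_apply] at hs; rw [← hs]; exact h
  have h2 := conj_commute_of _ _ _ hU1 h1
  have h3 := commute_diagonal_apply _ hA.1.eigenvalues Real.sqrt h2
  have h4 := conj_commute_of' _ _ _ hU2 h3
  rw [Matrix.PosSemidef.sqrt]
  exact h4

/-- Let `C` be a positive contraction in `Mₙ(ℂ)` (both `C` and `1 - C` positive semidefinite),
and let `R` be the (unique) positive semidefinite square root of `C * (1 - C)`.  Then the
`2n × 2n` block matrix `P_C = [[C, R], [R, 1 - C]]` is an orthogonal projection. -/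
theorem fromBlocks_positive_contraction_isProjection {n : ℕ}
    (C : Matrix (Fin n) (Fin n) ℂ)
    (hC : C.PosSemidef) (hC' : ((1 : Matrix (Fin n) (Fin n) ℂ) - C).PosSemidef)
    (R : Matrix (Fin n) (Fin n) ℂ)
    (hR : R.PosSemidef) (hR2 : R * R = C * ((1 : Matrix (Fin n) (Fin n) ℂ) - C)) :
    (Matrix.fromBlocks C R R ((1 : Matrix (Fin n) (Fin n) ℂ) - C))ᴴ
        = Matrix.fromBlocks C R R ((1 : Matrix (Fin n) (Fin n) ℂ) - C) ∧
      Matrix.fromBlocks C R R ((1 : Matrix (Fin n) (Fin n) ℂ) - C) *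
          Matrix.fromBlocks C R R ((1 : Matrix (Fin n) (Fin n) ℂ) - C)
        = Matrix.fromBlocks C R R ((1 : Matrix (Fin n) (Fin n) ℂ) - C) := by
  have hA : (C * ((1 : Matrix (Fin n) (Fin n) ℂ) - C)).PosSemidef := by
    rw [← hR2, ← pow_two]; exact hR.pow 2
  have hCA : C * (C * ((1 : Matrix (Fin n) (Fin n) ℂ) - C))
      = (C * ((1 : Matrix (Fin n) (Fin n) ℂ) - C)) * C := by noncomm_ring
  have hReq : R = hA.sqrt := hR.eq_sqrt_of_sq_eq hA (by rw [pow_two, hR2])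
  have hCR : C * R = R * C := by rw [hReq]; exact commute_sqrt hA hCA
  constructor
  · rw [Matrix.fromBlocks_conjTranspose, hC.1, hR.1, hC'.1]
  · have h11 : C * C + R * R = C := by rw [hR2]; noncomm_ring
    have h12 : C * R + R * ((1 : Matrix (Fin n) (Fin n) ℂ) - C) = R := by
      rw [hCR]; noncomm_ring
    have h21 : R * C + ((1 : Matrix (Fin n) (Fin n) ℂ) - C) * R = R := by
      rw [← hCR]; noncomm_ring
    have h22 : R * R + ((1 : Matrix (Fin n) (Fin n) ℂ) - C) * ((1 : Matrix (Fin n) (Fin n) ℂ) - C)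
        = (1 : Matrix (Fin n) (Fin n) ℂ) - C := by rw [hR2]; noncomm_ring
    rw [Matrix.fromBlocks_multiply, h11, h12, h21, h22]
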